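/- Let n' be a positive integer with gcd(n', q) = 1 and (q-1) | n', let δ_b be a positive divisor of n'/(q-1), and let δ = k δ_b with 1 ≤ k ≤ q - 1. Then the narrow-sense BCH code C over GF(q) of length n' with designed distance δ (defining set {1, ..., δ-1} of powers of a primitive n'-th root of unity β) has minimum distance exactly δ. Specifically, the polynomial c(x) = ((x^{n'} - 1)/(x^{n'/δ_b} - 1)) · Π_{i=1}^{k-1} (x^{n'/(δ_b(q-1))} - β^{i n'/(q-1)}) is a nonzero codeword of C of Hamming weight at most δ, and the BCH bound gives d ≥ δ. -/

import Mathlib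

/-- The q-cyclotomic coset of a modulo n: {a * q^j mod n : j ≥ 0}. -/
def cyclCoset (q n a : ℕ) : Finset ℕ :=
  (Finset.range n).image (fun j => a * q ^ j % n)

/-- a is the coset leader (smallest element) of its q-cyclotomic coset modulo n. -/
def IsCosetLeader (q n a : ℕ) : Prop :=
  ∀ j : ℕ, a ≤ a * q ^ j % n

open Polynomial in
lemma support_expand_card' {F : Type*} [Field F] {b : ℕ} (hb : 0 < b) (f : F[X]) :
    (Polynomial.expand F b f).support.card = f.support.card := by
  have h : (Polynomial.expand F b f).support = f.support.image (· * b) := by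
    ext n
    simp only [Polynomial.mem_support_iff, Finset.mem_image, Polynomial.coeff_expand hb]
    constructor
    · intro h
      by_cases hd : b ∣ n
      · exact ⟨n / b, by simpa [hd] using h, Nat.div_mul_cancel hd⟩
      · simp [hd] at h
    · rintro ⟨m, hm, rfl⟩
      simpa [dvd_mul_left, Nat.mul_div_cancel _ hb] using hm
  rw [h, Finset.card_image_of_injective _ (fun x y hxy => Nat.eq_of_mul_eq_mul_right hb hxy)]

open Polynomial in
lemma card_support_sum_le' {F : Type*} [Field F] {ι : Type*} (s : Finset ι) (f : ι → F[X]) :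
    (∑ t ∈ s, f t).support.card ≤ ∑ t ∈ s, (f t).support.card := by
  classical
  induction s using Finset.induction with
  | empty => simp
  | insert _ _ h ih =>
    rw [Finset.sum_insert h, Finset.sum_insert h]
    refine le_trans (le_trans (Finset.card_le_card ?_) (Finset.card_union_le _ _))
      (add_le_add le_rfl ih)
    exact fun n hn => Polynomial.support_add hn

open Polynomial in
lemma card_support_X_pow_mul_le' {F : Type*} [Field F] (m : ℕ) (p : F[X]) :
    (X ^ m * p).support.card ≤ p.support.card := by
  have h : (X ^ m * p).support ⊆ p.support.image (· + m) := by
    intro n hn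
    rw [Polynomial.mem_support_iff, Polynomial.coeff_X_pow_mul'] at hn
    by_cases hm : m ≤ n
    · rw [if_pos hm] at hn
      exact Finset.mem_image.2 ⟨n - m, Polynomial.mem_support_iff.2 hn, by omega⟩
    · rw [if_neg hm] at hn; exact absurd rfl hn
  exact le_trans (Finset.card_le_card h) (Finset.card_image_le)

open Polynomial in
lemma bch_lower {F E : Type*} [Field F] [Field E] [Algebra F E]
    (n' δ : ℕ) (hn : 0 < n') (β : E) (hβ : IsPrimitiveRoot β n')
    (c : F[X]) (hc : c ≠ 0) (hdeg : c.natDegree < n')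
    (hvan : ∀ j : ℕ, 1 ≤ j → j ≤ δ - 1 → Polynomial.aeval (β ^ j) c = 0) :
    δ ≤ c.support.card := by
  by_contra hlt
  push_neg at hlt
  have hwpos : 0 < c.support.card := Finset.card_pos.2 (Polynomial.support_nonempty.2 hc)
  have hwle : c.support.card ≤ δ - 1 := by omega
  classical
  set w := c.support.card with hw
  let ι : Fin w → ℕ := fun i => (c.support.equivFin.symm i : ℕ)
  have hmem : ∀ i, ι i ∈ c.support := fun i => (c.support.equivFin.symm i).2
  have hιlt : ∀ i, ι i < n' := fun i =>
    lt_of_le_of_lt (Polynomial.le_natDegree_of_mem_supp _ (hmem i)) hdeg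
  have hιinj : Function.Injective ι := fun i j h =>
    c.support.equivFin.symm.injective (Subtype.ext h)
  let x : Fin w → E := fun i => β ^ ι i
  have hxinj : Function.Injective x := fun i j h => hιinj (hβ.pow_inj (hιlt i) (hιlt j) h)
  have hxne : ∀ i, x i ≠ 0 := fun i => pow_ne_zero _ (hβ.ne_zero hn.ne')
  let M : Matrix (Fin w) (Fin w) E := fun j i => x i ^ ((j : ℕ) + 1)
  let v : Fin w → E := fun i => algebraMap F E (c.coeff (ι i))
  have hv : v ≠ 0 := by
    intro h
    have h0 : algebraMap F E (c.coeff (ι ⟨0, hwpos⟩)) = 0 := congrFun h ⟨0, hwpos⟩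
    exact Polynomial.mem_support_iff.1 (hmem ⟨0, hwpos⟩)
      ((map_eq_zero_iff _ (RingHom.injective _)).1 h0)
  have hMv : M.mulVec v = 0 := by
    funext j
    have hj : (j : ℕ) + 1 ≤ δ - 1 := le_trans (Nat.succ_le_of_lt j.2) hwle
    have hev := hvan ((j : ℕ) + 1) (by omega) hj
    rw [Polynomial.aeval_def, Polynomial.eval₂_eq_sum, Polynomial.sum_def] at hev
    have key : ∑ i : Fin w, (algebraMap F E (c.coeff (ι i))) * (β ^ ((j : ℕ) + 1)) ^ (ι i)
        = ∑ n ∈ c.support, (algebraMap F E (c.coeff n)) * (β ^ ((j : ℕ) + 1)) ^ n := by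
      rw [← Finset.sum_coe_sort c.support
        (fun n => (algebraMap F E (c.coeff n)) * (β ^ ((j : ℕ) + 1)) ^ (n : ℕ))]
      exact Equiv.sum_comp c.support.equivFin.symm
        (fun s => (algebraMap F E (c.coeff s)) * (β ^ ((j : ℕ) + 1)) ^ (s : ℕ))
    have : M.mulVec v j = ∑ i : Fin w, (algebraMap F E (c.coeff (ι i)))
        * (β ^ ((j : ℕ) + 1)) ^ (ι i) := by
      simp only [Matrix.mulVec, dotProduct, M, v, x]
      refine Finset.sum_congr rfl fun i _ => ?_
      rw [mul_comm, ← pow_mul, ← pow_mul, Nat.mul_comm]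
    rw [Pi.zero_apply, this, key, hev]
  have hdet : M.det = 0 := Matrix.exists_mulVec_eq_zero_iff.1 ⟨v, hv, hMv⟩
  have hfact : M = (Matrix.vandermonde x).transpose * Matrix.diagonal x := by
    ext j i
    rw [Matrix.mul_diagonal, Matrix.transpose_apply, Matrix.vandermonde_apply]
    show x i ^ ((j : ℕ) + 1) = x i ^ (j : ℕ) * x i
    rw [pow_succ]
  rw [hfact, Matrix.det_mul, Matrix.det_transpose, Matrix.det_vandermonde,
    Matrix.det_diagonal] at hdet
  rcases mul_eq_zero.1 hdet with h | h
  · rw [Finset.prod_eq_zero_iff] at h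
    obtain ⟨i, _, hi⟩ := h
    rw [Finset.prod_eq_zero_iff] at hi
    obtain ⟨jj, hjj, hij⟩ := hi
    exact (Finset.mem_Ioi.1 hjj).ne' (hxinj (sub_eq_zero.1 hij))
  · rw [Finset.prod_eq_zero_iff] at h
    obtain ⟨i, _, hi⟩ := h
    exact hxne i hi

theorem stmt_13 (q : ℕ) (hq : IsPrimePow q)
    (F : Type*) [Field F] [Fintype F] (hF : Fintype.card F = q)
    (E : Type*) [Field E] [Algebra F E]
    (n' : ℕ) (hn : 0 < n') (hcop : Nat.Coprime n' q) (hdvd : (q - 1) ∣ n')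
    (β : E) (hβ : IsPrimitiveRoot β n')
    (δb : ℕ) (hδb : 0 < δb) (hδbdvd : δb ∣ n' / (q - 1))
    (k δ : ℕ) (hk1 : 1 ≤ k) (hk2 : k ≤ q - 1) (hδ : δ = k * δb) :
    IsLeast {w : ℕ | ∃ c : Polynomial F, c ≠ 0 ∧ c.natDegree < n' ∧
      (∀ j : ℕ, 1 ≤ j → j ≤ δ - 1 → Polynomial.aeval (β ^ j) c = 0) ∧
      w = c.support.card} δ := by
  classical
  open Polynomial in
  have hq2 : 2 ≤ q := hq.two_le
  set N := n' / (q - 1) with hNdef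
  have hNq : N * (q - 1) = n' := Nat.div_mul_cancel hdvd
  have hQpos : 0 < q - 1 := by omega
  have hNpos : 0 < N := by
    rcases Nat.eq_zero_or_pos N with h | h
    · rw [h, zero_mul] at hNq; omega
    · exact h
  -- existence of γ ∈ F with algebraMap γ = β ^ N
  have hγE : (β ^ N) ^ (q - 1) = 1 := by
    rw [← pow_mul, hNq, hβ.pow_eq_one]
  obtain ⟨γ, hγ⟩ : ∃ γ : F, algebraMap F E γ = β ^ N := by
    by_contra hno
    push_neg at hno
    have hinj : Function.Injective (algebraMap F E) := (algebraMap F E).injective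
    set T : Finset E := ((Finset.univ : Finset F).erase 0).image (algebraMap F E) with hT
    have hnotmem : β ^ N ∉ T := by
      intro hmemT
      obtain ⟨a, _, ha⟩ := Finset.mem_image.1 hmemT
      exact hno a ha
    set S : Finset E := insert (β ^ N) T with hS
    have hcardS : S.card = q := by
      rw [hS, Finset.card_insert_of_notMem hnotmem, hT,
        Finset.card_image_of_injective _ hinj,
        Finset.card_erase_of_mem (Finset.mem_univ 0), Finset.card_univ, hF]
      omega
    set p : E[X] := X ^ (q - 1) - C 1 with hp
    have hpm : p.Monic := monic_X_pow_sub_C 1 (by omega)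
    have hp0 : p ≠ 0 := hpm.ne_zero
    have hroots : S ⊆ p.roots.toFinset := by
      intro z hz
      rw [Multiset.mem_toFinset, Polynomial.mem_roots hp0]
      rcases Finset.mem_insert.1 hz with h | h
      · subst h
        simp [p, Polynomial.IsRoot, hγE]
      · obtain ⟨a, ha, rfl⟩ := Finset.mem_image.1 h
        have ha0 : a ≠ 0 := Finset.ne_of_mem_erase ha
        have : a ^ (q - 1) = 1 := by
          have := FiniteField.pow_card_sub_one_eq_one a ha0
          rwa [hF] at this
        simp [p, Polynomial.IsRoot, ← map_pow, this]
    have : q ≤ q - 1 := by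
      calc q = S.card := hcardS.symm
        _ ≤ p.roots.toFinset.card := Finset.card_le_card hroots
        _ ≤ Multiset.card p.roots := Multiset.toFinset_card_le _
        _ ≤ p.natDegree := Polynomial.card_roots' p
        _ = q - 1 := Polynomial.natDegree_X_pow_sub_C
    omega
  -- setup quantities
  set b := N / δb with hbdef
  have hNb : δb * b = N := Nat.mul_div_cancel' hδbdvd
  have hbpos : 0 < b := by
    rcases Nat.eq_zero_or_pos b with h | h
    · rw [h, mul_zero] at hNb; omega
    · exact h
  set a := b * (q - 1) with hadef
  have hapos : 0 < a := Nat.mul_pos hbpos hQpos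
  have hn'a : n' = δb * a := by
    rw [hadef, ← hNq, ← hNb]; ring
  -- the codeword
  set G : F[X] := ∑ t ∈ Finset.range δb, X ^ t with hGdef
  set P : F[X] := ∏ i ∈ Finset.Ico 1 k, (X - C (γ ^ i)) with hPdef
  set c : F[X] := (Polynomial.expand F a G) * (Polynomial.expand F b P) with hcdef
  have hG0 : G ≠ 0 := by
    intro h
    have : G.coeff 0 = 1 := by
      rw [hGdef, Polynomial.finset_sum_coeff]
      simp only [Polynomial.coeff_X_pow]
      simp [hδb]
    rw [h] at this
    simp at this
  have hPm : P.Monic := Polynomial.monic_prod_of_monic _ _ fun i _ => Polynomial.monic_X_sub_C _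
  have hP0 : P ≠ 0 := hPm.ne_zero
  have hPdeg : P.natDegree = k - 1 := by
    rw [hPdef, Polynomial.natDegree_prod _ _ fun i _ => Polynomial.X_sub_C_ne_zero _]
    simp only [Polynomial.natDegree_X_sub_C, Finset.sum_const, Nat.card_Ico, smul_eq_mul,
      mul_one]
  have hGdeg : G.natDegree ≤ δb - 1 := by
    apply Polynomial.natDegree_sum_le_of_forall_le
    intro t ht
    rw [Polynomial.natDegree_X_pow]
    have := Finset.mem_range.1 ht
    omega
  have hc0 : c ≠ 0 := by
    apply mul_ne_zero
    · rw [Ne, Polynomial.expand_eq_zero hapos]; exact hG0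
    · rw [Ne, Polynomial.expand_eq_zero hbpos]; exact hP0
  have hcdeg : c.natDegree < n' := by
    have h1 : c.natDegree ≤ G.natDegree * a + P.natDegree * b := by
      refine le_trans (Polynomial.natDegree_mul_le) ?_
      rw [Polynomial.natDegree_expand, Polynomial.natDegree_expand]
    have h2 : G.natDegree * a + P.natDegree * b ≤ (δb - 1) * a + (k - 1) * b :=
      add_le_add (Nat.mul_le_mul_right _ hGdeg) (Nat.mul_le_mul_right _ (le_of_eq hPdeg))
    have e1 : (δb - 1) * a = δb * a - a := Nat.sub_one_mul _ _
    have e2 : (k - 1) * b = k * b - b := Nat.sub_one_mul _ _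
    have e3 : a ≤ δb * a := Nat.le_mul_of_pos_left a hδb
    have e4 : b ≤ k * b := Nat.le_mul_of_pos_left b hk1
    have e5 : k * b ≤ (q - 1) * b := Nat.mul_le_mul_right b hk2
    have e6 : (q - 1) * b = a := by rw [hadef]; ring
    omega
  -- the vanishing property
  have hvan : ∀ j : ℕ, 1 ≤ j → j ≤ δ - 1 → Polynomial.aeval (β ^ j) c = 0 := by
    intro j hj1 hj2
    have hδpos : 1 ≤ δ := by rw [hδ]; exact Nat.one_le_iff_ne_zero.2 (by positivity)
    rw [hcdef, map_mul, Polynomial.expand_aeval, Polynomial.expand_aeval]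
    by_cases hcase : δb ∣ j
    · apply mul_eq_zero_of_right
      obtain ⟨s, rfl⟩ := hcase
      have hs1 : 1 ≤ s := by
        rcases Nat.eq_zero_or_pos s with h | h
        · rw [h, mul_zero] at hj1; omega
        · exact h
      have hsk : s < k := by
        have : δb * s < k * δb := by
          have : δ - 1 < δ := by omega
          calc δb * s ≤ δ - 1 := hj2
            _ < δ := this
            _ = k * δb := hδ
        rw [Nat.mul_comm k δb] at this
        exact Nat.lt_of_mul_lt_mul_left this
      have hz : (β ^ (δb * s)) ^ b = algebraMap F E (γ ^ s) := by
        rw [map_pow, hγ, ← pow_mul, ← pow_mul]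
        congr 1
        rw [← hNb]; ring
      have hPev : Polynomial.aeval ((β ^ (δb * s)) ^ b) P =
          ∏ i ∈ Finset.Ico 1 k, ((β ^ (δb * s)) ^ b - algebraMap F E (γ ^ i)) := by
        rw [hPdef, map_prod]
        refine Finset.prod_congr rfl fun i _ => ?_
        rw [map_sub, Polynomial.aeval_X, Polynomial.aeval_C]
      rw [hPev]
      apply Finset.prod_eq_zero (Finset.mem_Ico.2 ⟨hs1, hsk⟩)
      rw [hz, sub_self]
    · apply mul_eq_zero_of_left
      set y : E := (β ^ j) ^ a with hy
      have hy1 : y ≠ 1 := by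
        intro h
        rw [hy, ← pow_mul, hβ.pow_eq_one_iff_dvd] at h
        rw [hn'a] at h
        rw [Nat.mul_comm δb a, Nat.mul_comm j a] at h
        exact hcase ((mul_dvd_mul_iff_left (by omega : (a:ℕ) ≠ 0)).1 h)
      have hyd : y ^ δb = 1 := by
        have han : a * δb = n' := by rw [hn'a]; ring
        calc y ^ δb = β ^ (j * (a * δb)) := by rw [hy, ← pow_mul, ← pow_mul, mul_assoc]
          _ = 1 := by rw [han, mul_comm j n', pow_mul, hβ.pow_eq_one, one_pow]
      have hsum : Polynomial.aeval y G = ∑ t ∈ Finset.range δb, y ^ t := by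
        rw [hGdef, map_sum]
        refine Finset.sum_congr rfl fun t _ => ?_
        rw [map_pow, Polynomial.aeval_X]
      have hgm := geom_sum_mul y δb
      rw [hyd, sub_self] at hgm
      rcases mul_eq_zero.1 hgm with h | h
      · rw [hsum]; exact h
      · exact absurd (sub_eq_zero.1 h) hy1
  -- support card upper bound
  have hsupp : c.support.card ≤ δ := by
    have hc_eq : c = Polynomial.expand F b ((Polynomial.expand F (q - 1) G) * P) := by
      rw [hcdef, map_mul, Polynomial.expand_expand]
    rw [hc_eq, support_expand_card' hbpos]
    have hsplit : (Polynomial.expand F (q - 1) G) * P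
        = ∑ t ∈ Finset.range δb, X ^ ((q - 1) * t) * P := by
      rw [hGdef, map_sum, Finset.sum_mul]
      refine Finset.sum_congr rfl fun t _ => ?_
      congr 1
      rw [map_pow, Polynomial.expand_X, ← pow_mul]
    rw [hsplit]
    calc (∑ t ∈ Finset.range δb, X ^ ((q - 1) * t) * P).support.card
        ≤ ∑ t ∈ Finset.range δb, (X ^ ((q - 1) * t) * P).support.card :=
          card_support_sum_le' _ _
      _ ≤ ∑ _t ∈ Finset.range δb, k := by
          refine Finset.sum_le_sum fun t _ => ?_
          refine le_trans (card_support_X_pow_mul_le' _ _) ?_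
          refine le_trans (Polynomial.card_supp_le_succ_natDegree P) ?_
          rw [hPdeg]; omega
      _ = δb * k := by rw [Finset.sum_const, Finset.card_range, smul_eq_mul]
      _ = δ := by rw [hδ, Nat.mul_comm]
  constructor
  · refine ⟨c, hc0, hcdeg, hvan, ?_⟩
    exact le_antisymm (bch_lower n' δ hn β hβ c hc0 hcdeg hvan) hsupp
  · rintro w ⟨c', hc', hdeg', hvan', rfl⟩
    exact bch_lower n' δ hn β hβ c' hc' hdeg' hvan'
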